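/- Let f_12, f_13 ∈ 𝓕 and let g_23 be the case-1 virtual interaction they induce. Then g̃_23(d) < f̃_12(d) for every d > 0; consequently ∫_d^1 g̃_23(x) dx → −∞ as d → 0⁺, and g_23 ∈ 𝓕. -/

import Mathlib

open Set Filter Topology MeasureTheory Matrix Function

attribute [local instance] Classical.propDecidable

noncomputable section

/-- `f̃(d) = d * f(d)`. -/
def tildeFn (f : ℝ → ℝ) : ℝ → ℝ := fun d => d * f d

/-- Membership in the class `𝓕` of monotone interaction laws:
`f` is `C¹` on `ℝ₊ = (0,∞)`, `f̃′ > 0` on `ℝ₊`, `f̃` has a zero, and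
`∫_d^1 f̃(x) dx → −∞` as `d → 0⁺`. -/
def MemF (f : ℝ → ℝ) : Prop :=
  ContDiffOn ℝ 1 f (Set.Ioi 0) ∧
  (∀ d > (0:ℝ), 0 < deriv (tildeFn f) d) ∧
  (∃ d > (0:ℝ), tildeFn f d = 0) ∧
  Tendsto (fun d => ∫ x in d..(1:ℝ), tildeFn f x) (𝓝[>] (0:ℝ)) atBot

/-- The space `C¹(ℝ₊, ℝ)`. -/
def C1Pos : Type := {f : ℝ → ℝ // ContDiffOn ℝ 1 f (Set.Ioi 0)}

/-- The Whitney `C¹`-topology on `C¹(ℝ₊, ℝ)`, generated by the basic open sets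
`B_δ(f) = {g : |g(d) − f(d)| + |g′(d) − f′(d)| < δ(d) for all d > 0}`. -/
instance : TopologicalSpace C1Pos :=
  TopologicalSpace.generateFrom
    { S | ∃ (f : C1Pos) (δ : ℝ → ℝ), ContinuousOn δ (Set.Ioi 0) ∧ (∀ d > (0:ℝ), 0 < δ d) ∧
        S = { g : C1Pos | ∀ d > (0:ℝ), |g.1 d - f.1 d| + |deriv g.1 d - deriv f.1 d| < δ d } }

/-- The class `𝓕` as a topological space (subspace of `C¹(ℝ₊,ℝ)`). -/
def FF : Type := {f : C1Pos // MemF f.1}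

instance : TopologicalSpace FF := instTopologicalSpaceSubtype

/-- `G` is a triangulated Laman graph: there is a Henneberg-type construction order
(a relabeling `σ`) starting from the edge between the first two vertices, in which every
later vertex is joined to exactly two earlier, adjacent, vertices. -/
def IsTLG {N : ℕ} (G : SimpleGraph (Fin N)) : Prop :=
  2 ≤ N ∧
  ∃ (σ : Equiv.Perm (Fin N)) (par₁ par₂ : Fin N → Fin N),
    (∀ k : Fin N, 2 ≤ (k : ℕ) →
      ((par₁ k : ℕ) < (k : ℕ) ∧ (par₂ k : ℕ) < (k : ℕ) ∧ par₁ k ≠ par₂ k ∧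
        G.Adj (σ (par₁ k)) (σ (par₂ k)))) ∧
    (∀ i j : Fin N, G.Adj (σ i) (σ j) ↔
      (((i : ℕ) = 0 ∧ (j : ℕ) = 1) ∨ ((i : ℕ) = 1 ∧ (j : ℕ) = 0) ∨
       (2 ≤ (i : ℕ) ∧ (j = par₁ i ∨ j = par₂ i)) ∨
       (2 ≤ (j : ℕ) ∧ (i = par₁ j ∨ i = par₂ j))))

/-- Euclidean distance on `ℝ²` (coordinates `(a,b)`). -/
def dist2 (x y : ℝ × ℝ) : ℝ := Real.sqrt ((x.1 - y.1)^2 + (x.2 - y.2)^2)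

/-- `p` belongs to the configuration space `P`: no collision of adjacent agents. -/
def InConfigSpace {N : ℕ} (G : SimpleGraph (Fin N)) (p : Fin N → ℝ × ℝ) : Prop :=
  ∀ i j, G.Adj i j → p i ≠ p j

/-- `p` is an equilibrium of the RMA system `ẋᵢ = Σ_{j : (i,j) ∈ E} f_ij(d_ij)(x_j − x_i)`. -/
def IsEquilibrium {N : ℕ} (G : SimpleGraph (Fin N)) (f : Fin N → Fin N → ℝ → ℝ)
    (p : Fin N → ℝ × ℝ) : Prop :=
  ∀ i, (∑ j, if G.Adj i j then (f i j (dist2 (p i) (p j))) • (p j - p i) else (0:ℝ×ℝ)) = 0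

/-- The potential function `Φ(p) = Σ_{(i,j) ∈ E} ∫_1^{d_ij} x f_ij(x) dx`
(each edge counted once; the factor 1/2 compensates the double count over ordered pairs). -/
def potential {N : ℕ} (G : SimpleGraph (Fin N)) (f : Fin N → Fin N → ℝ → ℝ)
    (p : Fin N → ℝ × ℝ) : ℝ :=
  (1/2) * ∑ i, ∑ j, if G.Adj i j then ∫ x in (1:ℝ)..(dist2 (p i) (p j)), x * f i j x else 0

/-- Coordinate directions on the configuration space, in the order `(a₁,…,a_N,b₁,…,b_N)`. -/
def basisVec {N : ℕ} : (Fin N ⊕ Fin N) → (Fin N → ℝ × ℝ) :=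
  Sum.elim (fun i => Pi.single i ((1:ℝ), (0:ℝ))) (fun i => Pi.single i ((0:ℝ), (1:ℝ)))

/-- The Hessian matrix of `Φ` at `p` in the coordinates `(a₁,…,a_N,b₁,…,b_N)`. -/
def hessian {N : ℕ} (Φ : (Fin N → ℝ × ℝ) → ℝ) (p : Fin N → ℝ × ℝ) :
    Matrix (Fin N ⊕ Fin N) (Fin N ⊕ Fin N) ℝ :=
  Matrix.of fun u v => fderiv ℝ (fun q => fderiv ℝ Φ q (basisVec v)) p (basisVec u)

/-- The inertia `𝐧(M) = (n₊(M), n₀(M), n₋(M))` of a real symmetric matrix: the numbers of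
positive, zero, and negative eigenvalues (counted with multiplicity). -/
def inertia {m : Type*} [Fintype m] [DecidableEq m] (M : Matrix m m ℝ) : ℕ × ℕ × ℕ :=
  if h : M.IsHermitian then
    ((Finset.univ.filter fun i => 0 < h.eigenvalues i).card,
     (Finset.univ.filter fun i => h.eigenvalues i = 0).card,
     (Finset.univ.filter fun i => h.eigenvalues i < 0).card)
  else (0, 0, 0)

/-- The number `n₀(M)` of zero eigenvalues of a real symmetric matrix. -/
def n0 {m : Type*} [Fintype m] [DecidableEq m] (M : Matrix m m ℝ) : ℕ := (inertia M).2.1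

/-- The vector-valued sign function. -/
def sgn3 (x : ℝ) : ℕ × ℕ × ℕ :=
  if 0 < x then (1,0,0) else if x = 0 then (0,1,0) else (0,0,1)

/-- `q` lies in the `SE(2)`-orbit of `p` (rigid motions: rotation by `(c,s)` with
`c² + s² = 1` followed by translation by `(vx,vy)`). -/
def sameOrbit {N : ℕ} (p q : Fin N → ℝ × ℝ) : Prop :=
  ∃ c s vx vy : ℝ, c^2 + s^2 = 1 ∧
    ∀ i, q i = (c * (p i).1 - s * (p i).2 + vx, s * (p i).1 + c * (p i).2 + vy)

/-- The interaction laws determined by an ensemble `ω ∈ 𝓕^{|E|}`. -/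
def ensembleLaws {N : ℕ} {G : SimpleGraph (Fin N)} (ω : G.edgeSet → FF) :
    Fin N → Fin N → ℝ → ℝ :=
  fun i j => if h : G.Adj i j then (ω ⟨s(i,j), G.mem_edgeSet.mpr h⟩).1.1 else 0

/-- The line configuration on the `a`-axis with coordinates `a`. -/
def lineConfig {N : ℕ} (a : Fin N → ℝ) : Fin N → ℝ × ℝ := fun i => (a i, 0)

/-- The matrix `F_p` of a line configuration with coordinates `a`: symmetric, zero row sums,
off-diagonal entries `φ_ij(d_ij)` on edges and `0` otherwise. -/
def FMat {N : ℕ} (G : SimpleGraph (Fin N)) (φ : Fin N → Fin N → ℝ → ℝ)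
    (a : Fin N → ℝ) : Matrix (Fin N) (Fin N) ℝ :=
  Matrix.of fun i j =>
    if i = j then -∑ k, (if G.Adj i k then φ i k |a i - a k| else 0)
    else if G.Adj i j then φ i j |a i - a j| else 0

/-- The matrix `d̃F_p`: off-diagonal entries `f̃′_ij(d_ij)` on edges. -/
def dFMat {N : ℕ} (G : SimpleGraph (Fin N)) (f : Fin N → Fin N → ℝ → ℝ)
    (a : Fin N → ℝ) : Matrix (Fin N) (Fin N) ℝ :=
  FMat G (fun i j d => deriv (tildeFn (f i j)) d) a

/-- Case 1 balanced distance: the (generically unique) `d₁₂(d)` with `0 < d₁₂ < d` and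
`f̃₁₂(d₁₂) = f̃₁₃(d − d₁₂)`. -/
def case1d12 (f12 f13 : ℝ → ℝ) (d : ℝ) : ℝ :=
  Classical.epsilon fun t => 0 < t ∧ t < d ∧ tildeFn f12 t = tildeFn f13 (d - t)

/-- The case-1 virtual interaction: `g̃₂₃(d) = f̃₁₂(d₁₂(d))`. -/
def g23Case1 (f12 f13 : ℝ → ℝ) : ℝ → ℝ :=
  fun d => tildeFn f12 (case1d12 f12 f13 d) / d

/-- Case 2 balanced distance: the (generically unique) `d₁₂(d) > 0` with
`f̃₁₂(d₁₂) + f̃₁₃(d₁₂ + d) = 0`. -/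
def case2d12 (f12 f13 : ℝ → ℝ) (d : ℝ) : ℝ :=
  Classical.epsilon fun t => 0 < t ∧ tildeFn f12 t + tildeFn f13 (t + d) = 0

/-- The case-2 virtual interaction: `g̃₂₃(d) = f̃₁₃(d₁₃(d))`, `d₁₃(d) = d₁₂(d) + d`. -/
def g23Case2 (f12 f13 : ℝ → ℝ) : ℝ → ℝ :=
  fun d => tildeFn f13 (case2d12 f12 f13 d + d) / d

/-- The case-3 virtual interaction: case 2 with the roles of agents 2,3 (and `f₁₂`,`f₁₃`)
interchanged. -/
def g23Case3 (f12 f13 : ℝ → ℝ) : ℝ → ℝ := g23Case2 f13 f12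

/-- The virtual interaction between agents 2 and 3 induced by `f₁₂`, `f₁₃`, chosen according
to which of the three aligned agents (at coordinates `a1`, `a2`, `a3`) lies between the
other two. -/
def virtualG (f12 f13 : ℝ → ℝ) (a1 a2 a3 : ℝ) : ℝ → ℝ :=
  if (a2 < a1 ∧ a1 < a3) ∨ (a3 < a1 ∧ a1 < a2) then g23Case1 f12 f13
  else if (a1 < a2 ∧ a2 < a3) ∨ (a3 < a2 ∧ a2 < a1) then g23Case2 f12 f13
  else g23Case3 f12 f13

/-- The interaction laws of the reduced system: vertex `0` (the last Henneberg vertex,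
the paper's vertex 1) is deleted, reduced vertex `i` is original vertex `i+1`, and the law on
the reduced edge `(0,1)` (the paper's edge `(2,3)`) is `f*₂₃ = f₂₃ + g₂₃`. -/
def reducedLaws {n : ℕ} (f : Fin (n+3) → Fin (n+3) → ℝ → ℝ) (g : ℝ → ℝ) :
    Fin (n+2) → Fin (n+2) → ℝ → ℝ :=
  fun i j => if (i = 0 ∧ j = 1) ∨ (i = 1 ∧ j = 0)
    then fun d => f i.succ j.succ d + g d
    else f i.succ j.succ

end

/- ===================== Auxiliary lemmas ===================== -/

section Aux

variable {f f12 f13 : ℝ → ℝ} {d t : ℝ}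

lemma MemF.tilde_contDiffOn (hf : MemF f) : ContDiffOn ℝ 1 (tildeFn f) (Set.Ioi 0) :=
  contDiffOn_id.mul hf.1

lemma MemF.tilde_continuousOn (hf : MemF f) : ContinuousOn (tildeFn f) (Set.Ioi 0) :=
  hf.tilde_contDiffOn.continuousOn

lemma MemF.tilde_strictMonoOn (hf : MemF f) : StrictMonoOn (tildeFn f) (Set.Ioi 0) := by
  apply strictMonoOn_of_deriv_pos (convex_Ioi 0) hf.tilde_continuousOn
  rw [interior_Ioi]
  exact fun x hx => hf.2.1 x hx

lemma MemF.tilde_hasDerivAt (hf : MemF f) (hd : 0 < d) :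
    HasDerivAt (tildeFn f) (deriv (tildeFn f) d) d :=
  ((hf.tilde_contDiffOn.differentiableOn one_ne_zero).differentiableAt
    (Ioi_mem_nhds hd)).hasDerivAt

lemma MemF.tilde_hasStrictDerivAt (hf : MemF f) (hd : 0 < d) :
    HasStrictDerivAt (tildeFn f) (deriv (tildeFn f) d) d := by
  have h := (hf.tilde_contDiffOn.contDiffAt (Ioi_mem_nhds hd)).hasStrictDerivAt one_ne_zero
  rwa [h.hasDerivAt.deriv] at h

lemma MemF.tilde_deriv_continuousOn (hf : MemF f) :
    ContinuousOn (deriv (tildeFn f)) (Set.Ioi 0) :=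
  hf.tilde_contDiffOn.continuousOn_deriv_of_isOpen isOpen_Ioi le_rfl

lemma MemF.tilde_intervalIntegrable (hf : MemF f) (hd : 0 < d) (hd1 : d ≤ 1) :
    IntervalIntegrable (tildeFn f) MeasureTheory.volume d 1 := by
  apply ContinuousOn.intervalIntegrable
  apply hf.tilde_continuousOn.mono
  rw [Set.uIcc_of_le hd1]
  exact fun x hx => lt_of_lt_of_le hd hx.1

/-- `f̃ → −∞` as `d → 0⁺`, for `f ∈ 𝓕`. -/
lemma MemF.tilde_tendsto_atBot (hf : MemF f) :
    Tendsto (tildeFn f) (𝓝[>] (0:ℝ)) atBot := by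
  rw [tendsto_atBot]
  intro b
  have key : ∃ t, 0 < t ∧ t ≤ 1 ∧ tildeFn f t < b := by
    by_contra hcon
    push_neg at hcon
    have hev : ∀ᶠ d in 𝓝[>] (0:ℝ),
        (∫ x in d..(1:ℝ), tildeFn f x) ≤ -|b| - 1 :=
      hf.2.2.2.eventually (eventually_le_atBot _)
    obtain ⟨d, ⟨hint, hd0⟩, hd1⟩ := ((hev.and eventually_mem_nhdsWithin).and
      (eventually_nhdsWithin_of_eventually_nhds (eventually_lt_nhds zero_lt_one))).exists
    have hd0 : (0:ℝ) < d := hd0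
    have hmono : ∀ x ∈ Set.Icc d 1, b ≤ tildeFn f x := fun x hx =>
      hcon x (lt_of_lt_of_le hd0 hx.1) hx.2
    have hge : (1 - d) * b ≤ ∫ x in d..(1:ℝ), tildeFn f x := by
      have := intervalIntegral.integral_mono_on (le_of_lt hd1)
        (intervalIntegrable_const (c := b)) (hf.tilde_intervalIntegrable hd0 (le_of_lt hd1))
        hmono
      simpa using this
    nlinarith [abs_nonneg b, le_abs_self b, neg_abs_le b]
  obtain ⟨t, ht0, ht1, htb⟩ := key
  filter_upwards [Ioo_mem_nhdsGT ht0] with x hx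
  exact le_of_lt (lt_trans (hf.tilde_strictMonoOn hx.1 ht0 hx.2) htb)

/-- Existence of the balanced distance. -/
lemma contAt_shift (h13 : MemF f13) {c e : ℝ} (h : 0 < e - c) :
    ContinuousAt (fun x => tildeFn f13 (x - c)) e := by
  have h1 : ContinuousAt (tildeFn f13) (e - c) :=
    h13.tilde_continuousOn.continuousAt (Ioi_mem_nhds h)
  exact ContinuousAt.comp (f := fun x => x - c) h1 (continuousAt_id.sub continuousAt_const)

lemma exists_balance (h12 : MemF f12) (h13 : MemF f13) (hd : 0 < d) :
    ∃ t, 0 < t ∧ t < d ∧ tildeFn f12 t = tildeFn f13 (d - t) := by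
  set F := tildeFn f12
  set G := tildeFn f13
  have hd2 : 0 < d / 2 := half_pos hd
  -- pick t₁ ∈ (0, d/2) with F t₁ < G (d/2)
  obtain ⟨t₁, ht₁b, ht₁o⟩ :=
    ((h12.tilde_tendsto_atBot.eventually (eventually_lt_atBot (G (d/2)))).and
      (Ioo_mem_nhdsGT hd2)).exists
  -- pick s₂ ∈ (0, d/2) with G s₂ < F (d/2)
  obtain ⟨s₂, hs₂b, hs₂o⟩ :=
    ((h13.tilde_tendsto_atBot.eventually (eventually_lt_atBot (F (d/2)))).and
      (Ioo_mem_nhdsGT hd2)).exists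
  set t₂ := d - s₂ with ht₂def
  have ht₁0 : 0 < t₁ := ht₁o.1
  have ht₂d : t₂ < d := by simp [ht₂def]; linarith [hs₂o.1]
  have ht₁₂ : t₁ < t₂ := by
    have : d / 2 < t₂ := by simp [ht₂def]; linarith [hs₂o.2]
    linarith [ht₁o.2]
  have hsub : Set.Icc t₁ t₂ ⊆ Set.Ioi (0:ℝ) := fun x hx => lt_of_lt_of_le ht₁0 hx.1
  have hsub' : ∀ x ∈ Set.Icc t₁ t₂, d - x ∈ Set.Ioi (0:ℝ) := fun x hx => by
    simp; linarith [hx.2, hs₂o.1]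
  have hcont : ContinuousOn (fun t => F t - G (d - t)) (Set.Icc t₁ t₂) := by
    apply ContinuousOn.sub (h12.tilde_continuousOn.mono hsub)
    exact (h13.tilde_continuousOn.comp (continuousOn_const.sub continuousOn_id) hsub')
  have hneg : F t₁ - G (d - t₁) < 0 := by
    have hG : G (d/2) ≤ G (d - t₁) := by
      rcases eq_or_lt_of_le (by linarith [ht₁o.2] : d/2 ≤ d - t₁) with h | h
      · rw [h]
      · exact le_of_lt (h13.tilde_strictMonoOn hd2 (lt_trans hd2 h) h)
    linarith [ht₁b]
  have hpos : 0 < F t₂ - G (d - t₂) := by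
    have hGt : G (d - t₂) = G s₂ := by rw [ht₂def]; ring_nf
    have hF : F (d/2) ≤ F t₂ := by
      rcases eq_or_lt_of_le (by simp [ht₂def]; linarith [hs₂o.2] : d/2 ≤ t₂) with h | h
      · rw [h]
      · exact le_of_lt (h12.tilde_strictMonoOn hd2 (lt_trans hd2 h) h)
    rw [hGt]; linarith [hs₂b]
  have h0mem : (0:ℝ) ∈ Set.Icc (F t₁ - G (d - t₁)) (F t₂ - G (d - t₂)) :=
    ⟨le_of_lt hneg, le_of_lt hpos⟩
  obtain ⟨t, htmem, hteq⟩ := intermediate_value_Icc (le_of_lt ht₁₂) hcont h0mem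
  exact ⟨t, lt_of_lt_of_le ht₁0 htmem.1, lt_of_le_of_lt htmem.2 ht₂d, by linarith [sub_eq_zero.mp hteq]⟩

/-- Uniqueness of the balanced distance. -/
lemma balance_unique (h12 : MemF f12) (h13 : MemF f13) {t t' : ℝ}
    (h : 0 < t ∧ t < d ∧ tildeFn f12 t = tildeFn f13 (d - t))
    (h' : 0 < t' ∧ t' < d ∧ tildeFn f12 t' = tildeFn f13 (d - t')) : t = t' := by
  obtain ⟨ht0, htd, hte⟩ := h
  obtain ⟨ht0', htd', hte'⟩ := h'
  by_contra hne
  rcases lt_or_gt_of_ne hne with hlt | hlt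
  · have h1 : tildeFn f12 t < tildeFn f12 t' := h12.tilde_strictMonoOn ht0 ht0' hlt
    have h2 : tildeFn f13 (d - t') < tildeFn f13 (d - t) :=
      h13.tilde_strictMonoOn (by simp; linarith) (by simp; linarith) (by linarith)
    linarith
  · have h1 : tildeFn f12 t' < tildeFn f12 t := h12.tilde_strictMonoOn ht0' ht0 hlt
    have h2 : tildeFn f13 (d - t) < tildeFn f13 (d - t') :=
      h13.tilde_strictMonoOn (by simp; linarith) (by simp; linarith) (by linarith)
    linarith

lemma case1d12_spec (h12 : MemF f12) (h13 : MemF f13) (hd : 0 < d) :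
    0 < case1d12 f12 f13 d ∧ case1d12 f12 f13 d < d ∧
      tildeFn f12 (case1d12 f12 f13 d) = tildeFn f13 (d - case1d12 f12 f13 d) :=
  Classical.epsilon_spec (exists_balance h12 h13 hd)

lemma case1d12_eq (h12 : MemF f12) (h13 : MemF f13) (hd : 0 < d)
    (h : 0 < t ∧ t < d ∧ tildeFn f12 t = tildeFn f13 (d - t)) :
    case1d12 f12 f13 d = t :=
  balance_unique h12 h13 (case1d12_spec h12 h13 hd) h

/-- Continuity of `d ↦ d₁₂(d)`. -/
lemma case1d12_continuousAt (h12 : MemF f12) (h13 : MemF f13) (hd : 0 < d) :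
    ContinuousAt (case1d12 f12 f13) d := by
  set D := case1d12 f12 f13
  obtain ⟨ht0, htd, hte⟩ := case1d12_spec h12 h13 hd
  set t₀ := D d with ht₀def
  show Tendsto D (𝓝 d) (𝓝 t₀)
  rw [Metric.tendsto_nhds]
  intro ε hε
  set ε' := min ε (min (t₀ / 2) ((d - t₀) / 2)) with hε'def
  have hε'ε : ε' ≤ ε := min_le_left _ _
  have hε'0 : 0 < ε' := lt_min hε (lt_min (by linarith) (by linarith))
  have hε't : ε' < t₀ := lt_of_le_of_lt (le_trans (min_le_right _ _) (min_le_left _ _)) (by linarith)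
  have hε'd : t₀ + ε' < d := by
    have h1 : ε' ≤ (d - t₀) / 2 :=
      le_trans (min_le_right ε _) (min_le_right (t₀/2) ((d-t₀)/2))
    linarith
  set tm := t₀ - ε' with htmdef
  set tp := t₀ + ε' with htpdef
  have htm0 : 0 < tm := by simp [htmdef]; linarith
  have htp0 : 0 < tp := by positivity
  -- the "comparison" functions of d are continuous and have signed values at d
  have hGm : ContinuousAt (fun x => tildeFn f12 tm - tildeFn f13 (x - tm)) d :=
    ContinuousAt.sub continuousAt_const
      (contAt_shift h13 (by simp only [htmdef]; linarith))
  have hGp : ContinuousAt (fun x => tildeFn f12 tp - tildeFn f13 (x - tp)) d :=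
    ContinuousAt.sub continuousAt_const
      (contAt_shift h13 (by simp only [htpdef]; linarith))
  have hvm : tildeFn f12 tm - tildeFn f13 (d - tm) < 0 := by
    have h1 : tildeFn f12 tm < tildeFn f12 t₀ := h12.tilde_strictMonoOn htm0 ht0 (by simp [htmdef]; linarith)
    have h2 : tildeFn f13 (d - t₀) ≤ tildeFn f13 (d - tm) := by
      apply le_of_lt (h13.tilde_strictMonoOn (by simp; linarith) (by simp; linarith) (by simp [htmdef]; linarith))
    linarith
  have hvp : 0 < tildeFn f12 tp - tildeFn f13 (d - tp) := by
    have h1 : tildeFn f12 t₀ < tildeFn f12 tp := h12.tilde_strictMonoOn ht0 htp0 (by simp [htpdef]; linarith)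
    have h2 : tildeFn f13 (d - tp) ≤ tildeFn f13 (d - t₀) := by
      apply le_of_lt (h13.tilde_strictMonoOn (by simp; linarith) (by simp; linarith) (by simp [htpdef]; linarith))
    linarith
  filter_upwards [hGm.eventually_lt_const hvm, hGp.eventually_const_lt hvp,
    eventually_gt_nhds (show tp < d by simpa [htpdef] using hε'd)] with x hm hp hx
  have hx0 : 0 < x := lt_trans htp0 hx
  obtain ⟨hs0, hsd, hse⟩ := case1d12_spec h12 h13 hx0
  set s := D x with hsdef
  -- s ∈ (tm, tp)
  have hlow : tm < s := by
    by_contra hcon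
    push_neg at hcon
    have h1 : tildeFn f12 s ≤ tildeFn f12 tm := by
      rcases eq_or_lt_of_le hcon with h | h
      · rw [h]
      · exact le_of_lt (h12.tilde_strictMonoOn hs0 htm0 h)
    have h2 : tildeFn f13 (x - tm) ≤ tildeFn f13 (x - s) := by
      rcases eq_or_lt_of_le hcon with h | h
      · rw [h]
      · exact le_of_lt (h13.tilde_strictMonoOn (by simp; linarith) (by simp; linarith) (by linarith))
    rw [hse] at h1
    linarith
  have hhigh : s < tp := by
    by_contra hcon
    push_neg at hcon
    have h1 : tildeFn f12 tp ≤ tildeFn f12 s := by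
      rcases eq_or_lt_of_le hcon with h | h
      · rw [h]
      · exact le_of_lt (h12.tilde_strictMonoOn htp0 hs0 h)
    have h2 : tildeFn f13 (x - s) ≤ tildeFn f13 (x - tp) := by
      rcases eq_or_lt_of_le hcon with h | h
      · rw [h]
      · exact le_of_lt (h13.tilde_strictMonoOn (by simp; linarith) (by simp; linarith) (by linarith))
    rw [hse] at h1
    linarith
  rw [Real.dist_eq, abs_lt]
  constructor <;> [skip; skip] <;>
    simp only [htmdef, htpdef] at hlow hhigh <;> linarith [lt_of_lt_of_le hlow (le_refl s)]

/-- The derivative value of `d ↦ d₁₂(d)`. -/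
noncomputable def d12deriv (f12 f13 : ℝ → ℝ) : ℝ → ℝ := fun d =>
  deriv (tildeFn f13) (d - case1d12 f12 f13 d) /
    (deriv (tildeFn f12) (case1d12 f12 f13 d) + deriv (tildeFn f13) (d - case1d12 f12 f13 d))

lemma case1d12_hasDerivAt (h12 : MemF f12) (h13 : MemF f13) (hd : 0 < d) :
    HasDerivAt (case1d12 f12 f13) (d12deriv f12 f13 d) d := by
  set D := case1d12 f12 f13
  obtain ⟨ht0, htd, hte⟩ := case1d12_spec h12 h13 hd
  set t₀ := D d with ht₀def
  set s₀ := d - t₀ with hs₀def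
  have hs₀0 : 0 < s₀ := by simp [hs₀def]; linarith
  set f' := deriv (tildeFn f12) t₀ with hf'def
  set g' := deriv (tildeFn f13) s₀ with hg'def
  have hf'0 : 0 < f' := h12.2.1 _ ht0
  have hg'0 : 0 < g' := h13.2.1 _ hs₀0
  have hGs : HasStrictDerivAt (tildeFn f13) g' s₀ := h13.tilde_hasStrictDerivAt hs₀0
  have hg'ne : g' ≠ 0 := ne_of_gt hg'0
  set Ginv := hGs.localInverse (tildeFn f13) g' s₀ hg'ne with hGinvdef
  have hinv : HasStrictDerivAt Ginv g'⁻¹ (tildeFn f13 s₀) := hGs.to_localInverse hg'ne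
  have hleft : ∀ᶠ s in 𝓝 s₀, Ginv (tildeFn f13 s) = s :=
    (hGs.hasStrictFDerivAt_equiv hg'ne).eventually_left_inverse
  have hFt : HasStrictDerivAt (tildeFn f12) f' t₀ := h12.tilde_hasStrictDerivAt ht0
  -- Ψ t = t + Ginv (F t)
  have hΨ : HasDerivAt (fun t => t + Ginv (tildeFn f12 t)) (1 + g'⁻¹ * f') t₀ := by
    have h1 : HasStrictDerivAt (fun t => Ginv (tildeFn f12 t)) (g'⁻¹ * f') t₀ := by
      have := HasStrictDerivAt.comp t₀ (by rwa [← hte] at hinv) hFt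
      exact this
    exact (hasDerivAt_id t₀).add h1.hasDerivAt
  have hcontD : ContinuousAt D d := case1d12_continuousAt h12 h13 hd
  have hfg : ∀ᶠ x in 𝓝 d, (fun t => t + Ginv (tildeFn f12 t)) (D x) = x := by
    have htend : Tendsto (fun x => x - D x) (𝓝 d) (𝓝 s₀) := by
      have h := (continuousAt_id.sub hcontD : ContinuousAt (fun x => x - D x) d)
      exact h
    filter_upwards [htend.eventually hleft, eventually_gt_nhds hd,
      htend.eventually (eventually_gt_nhds hs₀0)] with x hx hx0 _
    obtain ⟨hs0, hsd, hse⟩ := case1d12_spec h12 h13 hx0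
    show D x + Ginv (tildeFn f12 (D x)) = x
    rw [hse, hx]
    ring
  have hmain : HasDerivAt D (1 + g'⁻¹ * f')⁻¹ d :=
    HasDerivAt.of_local_left_inverse hcontD hΨ (by positivity) hfg
  have : (1 + g'⁻¹ * f')⁻¹ = d12deriv f12 f13 d := by
    rw [d12deriv]
    show (1 + g'⁻¹ * f')⁻¹ = g' / (f' + g')
    rw [show 1 + g'⁻¹ * f' = (g' + f') / g' by rw [add_div, div_self hg'ne, div_eq_inv_mul], inv_div, add_comm g' f']
  rwa [this] at hmain

lemma tilde_g23_eq (hd : d ≠ 0) :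
    tildeFn (g23Case1 f12 f13) d = tildeFn f12 (case1d12 f12 f13 d) := by
  simp only [tildeFn, g23Case1]
  field_simp

end Aux

/-- for the case-1 virtual interaction `g₂₃` induced by `f₁₂, f₁₃ ∈ 𝓕`,
`g̃₂₃(d) < f̃₁₂(d)` for all `d > 0`; consequently `∫_d^1 g̃₂₃ → −∞` as `d → 0⁺`, and
`g₂₃ ∈ 𝓕`. -/
theorem statement8 (f12 f13 : ℝ → ℝ) (h12 : MemF f12) (h13 : MemF f13) :
    (∀ d > (0:ℝ), tildeFn (g23Case1 f12 f13) d < tildeFn f12 d) ∧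
    Tendsto (fun d => ∫ x in d..(1:ℝ), tildeFn (g23Case1 f12 f13) x) (𝓝[>] (0:ℝ)) atBot ∧
    MemF (g23Case1 f12 f13) := by
  set D := case1d12 f12 f13 with hDdef
  set g := g23Case1 f12 f13 with hgdef
  -- Part 1 : g̃₂₃ < f̃₁₂ on (0,∞)
  have hlt : ∀ d > (0:ℝ), tildeFn (g23Case1 f12 f13) d < tildeFn f12 d := by
    intro d hd
    obtain ⟨ht0, htd, _⟩ := case1d12_spec h12 h13 hd
    rw [tilde_g23_eq (ne_of_gt hd)]
    exact h12.tilde_strictMonoOn ht0 hd htd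
  -- continuity of D on Ioi 0
  have hDcont : ContinuousOn (case1d12 f12 f13) (Set.Ioi 0) := fun x hx =>
    (case1d12_continuousAt h12 h13 hx).continuousWithinAt
  have hDmaps : ∀ x ∈ Set.Ioi (0:ℝ), case1d12 f12 f13 x ∈ Set.Ioi (0:ℝ) := fun x hx =>
    (case1d12_spec h12 h13 hx).1
  have hDmaps' : ∀ x ∈ Set.Ioi (0:ℝ), x - case1d12 f12 f13 x ∈ Set.Ioi (0:ℝ) := fun x hx => by
    have := (case1d12_spec h12 h13 hx).2.1
    simp only [Set.mem_Ioi]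
    linarith
  -- HasDerivAt for F ∘ D
  have hFD : ∀ d > (0:ℝ), HasDerivAt (fun x => tildeFn f12 (case1d12 f12 f13 x))
      (deriv (tildeFn f12) (case1d12 f12 f13 d) * d12deriv f12 f13 d) d := by
    intro d hd
    exact (h12.tilde_hasDerivAt (case1d12_spec h12 h13 hd).1).comp d
      (case1d12_hasDerivAt h12 h13 hd)
  have hd12pos : ∀ d > (0:ℝ), 0 < d12deriv f12 f13 d := by
    intro d hd
    obtain ⟨ht0, htd, _⟩ := case1d12_spec h12 h13 hd
    have h1 : 0 < deriv (tildeFn f12) (case1d12 f12 f13 d) := h12.2.1 _ ht0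
    have h2 : 0 < deriv (tildeFn f13) (d - case1d12 f12 f13 d) := h13.2.1 _ (by linarith)
    rw [d12deriv]
    positivity
  -- HasDerivAt for tildeFn g
  have htg : ∀ d > (0:ℝ), HasDerivAt (tildeFn (g23Case1 f12 f13))
      (deriv (tildeFn f12) (case1d12 f12 f13 d) * d12deriv f12 f13 d) d := by
    intro d hd
    apply (hFD d hd).congr_of_eventuallyEq
    filter_upwards [eventually_gt_nhds hd] with x hx
    rw [tilde_g23_eq (ne_of_gt hx)]
  -- HasDerivAt for g itself
  have hg' : ∀ d > (0:ℝ), HasDerivAt (g23Case1 f12 f13)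
      ((deriv (tildeFn f12) (case1d12 f12 f13 d) * d12deriv f12 f13 d * d
        - tildeFn f12 (case1d12 f12 f13 d) * 1) / d ^ 2) d := by
    intro d hd
    exact (hFD d hd).div (hasDerivAt_id d) (ne_of_gt hd)
  -- continuity facts
  have c1 : ContinuousOn (fun d => deriv (tildeFn f12) (case1d12 f12 f13 d)) (Set.Ioi 0) :=
    h12.tilde_deriv_continuousOn.comp hDcont hDmaps
  have c2 : ContinuousOn (fun d => deriv (tildeFn f13) (d - case1d12 f12 f13 d)) (Set.Ioi 0) :=
    h13.tilde_deriv_continuousOn.comp (continuousOn_id.sub hDcont) hDmaps'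
  have cd12 : ContinuousOn (d12deriv f12 f13) (Set.Ioi 0) := by
    apply ContinuousOn.div c2 (c1.add c2)
    intro x hx
    have h1 : 0 < deriv (tildeFn f12) (case1d12 f12 f13 x) := h12.2.1 _ (hDmaps x hx)
    have h2 : 0 < deriv (tildeFn f13) (x - case1d12 f12 f13 x) := h13.2.1 _ (hDmaps' x hx)
    show deriv (tildeFn f12) (case1d12 f12 f13 x) + deriv (tildeFn f13) (x - case1d12 f12 f13 x) ≠ 0
    exact ne_of_gt (add_pos h1 h2)
  have cF : ContinuousOn (fun d => tildeFn f12 (case1d12 f12 f13 d)) (Set.Ioi 0) :=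
    h12.tilde_continuousOn.comp hDcont hDmaps
  -- ContDiffOn of g
  have hgC1 : ContDiffOn ℝ 1 (g23Case1 f12 f13) (Set.Ioi 0) := by
    have hone : ((0:WithTop ℕ∞) + 1) = 1 := by norm_num
    rw [← hone, contDiffOn_succ_iff_deriv_of_isOpen isOpen_Ioi]
    refine ⟨fun x hx => ((hg' x hx).differentiableAt).differentiableWithinAt,
      fun h => absurd h (by simp), ?_⟩
    rw [contDiffOn_zero]
    have cφ : ContinuousOn (fun d =>
        (deriv (tildeFn f12) (case1d12 f12 f13 d) * d12deriv f12 f13 d * d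
          - tildeFn f12 (case1d12 f12 f13 d) * 1) / d ^ 2) (Set.Ioi 0) := by
      apply ContinuousOn.div (((c1.mul cd12).mul continuousOn_id).sub (cF.mul continuousOn_const))
        (continuousOn_pow 2)
      intro x hx
      have : (0:ℝ) < x := hx
      positivity
    exact cφ.congr fun x hx => (hg' x hx).deriv
  -- continuity of tildeFn g
  have ctg : ContinuousOn (tildeFn (g23Case1 f12 f13)) (Set.Ioi 0) := by
    apply cF.congr
    intro x hx
    rw [tilde_g23_eq (ne_of_gt (show (0:ℝ) < x from hx))]
  -- zero of tildeFn g
  have hzero : ∃ d > (0:ℝ), tildeFn (g23Case1 f12 f13) d = 0 := by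
    obtain ⟨z12, hz12, hz12e⟩ := h12.2.2.1
    obtain ⟨z13, hz13, hz13e⟩ := h13.2.2.1
    refine ⟨z12 + z13, by positivity, ?_⟩
    have hDz : case1d12 f12 f13 (z12 + z13) = z12 :=
      case1d12_eq h12 h13 (by positivity)
        ⟨hz12, by linarith, by rw [hz12e, show z12 + z13 - z12 = z13 by ring, hz13e]⟩
    rw [tilde_g23_eq (by positivity : z12 + z13 ≠ 0), hDz, hz12e]
  -- derivative positivity
  have hderivpos : ∀ d > (0:ℝ), 0 < deriv (tildeFn (g23Case1 f12 f13)) d := by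
    intro d hd
    rw [(htg d hd).deriv]
    exact mul_pos (h12.2.1 _ (hDmaps d hd)) (hd12pos d hd)
  -- integral tendsto
  have hint : Tendsto (fun d => ∫ x in d..(1:ℝ), tildeFn (g23Case1 f12 f13) x)
      (𝓝[>] (0:ℝ)) atBot := by
    apply tendsto_atBot_mono' (𝓝[>] (0:ℝ)) _ h12.2.2.2
    filter_upwards [Ioo_mem_nhdsGT (zero_lt_one)] with d hd
    have hd0 : (0:ℝ) < d := hd.1
    have hd1 : d ≤ 1 := le_of_lt hd.2
    apply intervalIntegral.integral_mono_on hd1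
    · apply ContinuousOn.intervalIntegrable
      apply ctg.mono
      rw [Set.uIcc_of_le hd1]
      exact fun x hx => lt_of_lt_of_le hd0 hx.1
    · exact h12.tilde_intervalIntegrable hd0 hd1
    · exact fun x hx => le_of_lt (hlt x (lt_of_lt_of_le hd0 hx.1))
  exact ⟨hlt, hint, hgC1, hderivpos, hzero, hint⟩
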